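/- Let p_X and p_H be probability measures on ℝ with finite first and second moments, with mean of p_X equal to μ_X, mean of p_H equal to 0, and σ⁴·Var(p_X) + Var(p_H) > 0. Let σ² ∈ (0, 1] and 0 ≤ L < 1. Among all affine functions ψ(z) = m·z + b with 1/(1+L) ≤ m ≤ 1/(1−L), the expected reconstruction loss ∫∫ |ψ(σ²·x + η) − x|² dp_H(η) dp_X(x) (with x ~ p_X and η ~ p_H independent) is uniquely minimized by ψ*(z) = m*·z + (1 − σ²·m*)·μ_X, where m* is the value σ²·Var(p_X)/(σ⁴·Var(p_X) + Var(p_H)) clamped to the interval [1/(1+L), 1/(1−L)]; i.e. m* = 1/(1+L) if that ratio is < 1/(1+L), m* equals the ratio if it lies in [1/(1+L), 1/(1−L)], and m* = 1/(1−L) if the ratio is > 1/(1−L). -/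

import Mathlib

open MeasureTheory

/-- Mean of a probability measure on `ℝ`. -/
noncomputable def measMean (p : Measure ℝ) : ℝ := ∫ x, x ∂p

/-- Variance of a probability measure on `ℝ`. -/
noncomputable def measVar (p : Measure ℝ) : ℝ := ∫ x, (x - measMean p) ^ 2 ∂p

/-- The value `r` clamped to the interval `[1/(1+L), 1/(1-L)]`. -/
noncomputable def clampedSlope (L r : ℝ) : ℝ :=
  if r < 1 / (1 + L) then 1 / (1 + L)
  else if 1 / (1 - L) < r then 1 / (1 - L) else r

/-- Expected reconstruction loss of the affine map `z ↦ m z + b` for the 1D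
problem `z = s·x + η`, with `x ~ pX` and `η ~ pH` independent. -/
noncomputable def affineReconLoss (pX pH : Measure ℝ) (s m b : ℝ) : ℝ :=
  ∫ x, ∫ η, (m * (s * x + η) + b - x) ^ 2 ∂pH ∂pX


lemma measVar_eq (p : Measure ℝ) [IsProbabilityMeasure p]
    (h1 : Integrable (fun x => x) p) (h2 : Integrable (fun x => x ^ 2) p) :
    measVar p = (∫ x, x ^ 2 ∂p) - (measMean p) ^ 2 := by
  unfold measVar
  have h : ∀ x : ℝ, (x - measMean p) ^ 2
      = x ^ 2 - (2 * measMean p) * x + (measMean p) ^ 2 := by intro x; ring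
  simp_rw [h]
  have i1 : Integrable (fun x : ℝ => x ^ 2 - (2 * measMean p) * x) p :=
    h2.sub (h1.const_mul _)
  have i2 : Integrable (fun x : ℝ => (2 * measMean p) * x) p := h1.const_mul _
  rw [integral_add i1 (integrable_const _), integral_sub h2 i2,
      integral_const_mul, integral_const]
  simp [measMean]
  ring

lemma inner_int (pH : Measure ℝ) [IsProbabilityMeasure pH]
    (hH1 : Integrable (fun η => η) pH) (hH2 : Integrable (fun η => η ^ 2) pH)
    (A m : ℝ) :
    ∫ η, (A + m * η) ^ 2 ∂pH
      = A ^ 2 + 2 * A * m * measMean pH + m ^ 2 * ∫ η, η ^ 2 ∂pH := by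
  have h : ∀ η : ℝ, (A + m * η) ^ 2
      = A ^ 2 + (2 * A * m) * η + m ^ 2 * η ^ 2 := by intro η; ring
  simp_rw [h]
  have i1 : Integrable (fun η : ℝ => A ^ 2 + (2 * A * m) * η) pH :=
    (integrable_const _).add (hH1.const_mul _)
  have i2 : Integrable (fun η : ℝ => (2 * A * m) * η) pH := hH1.const_mul _
  have i3 : Integrable (fun η : ℝ => m ^ 2 * η ^ 2) pH := hH2.const_mul _
  rw [integral_add i1 i3, integral_add (integrable_const _) i2,
      integral_const, integral_const_mul, integral_const_mul]
  simp [measMean]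

lemma loss_eq (pX pH : Measure ℝ) [IsProbabilityMeasure pX] [IsProbabilityMeasure pH]
    (hX1 : Integrable (fun x => x) pX) (hX2 : Integrable (fun x => x ^ 2) pX)
    (hH1 : Integrable (fun η => η) pH) (hH2 : Integrable (fun η => η ^ 2) pH)
    (hHmean : measMean pH = 0) (s m b : ℝ) :
    affineReconLoss pX pH s m b =
      (m * s - 1) ^ 2 * measVar pX + ((m * s - 1) * measMean pX + b) ^ 2
        + m ^ 2 * measVar pH := by
  have hE2 : (∫ η, η ^ 2 ∂pH) = measVar pH := by
    rw [measVar_eq pH hH1 hH2, hHmean]; ring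
  have hEX2 : (∫ x, x ^ 2 ∂pX) = measVar pX + (measMean pX) ^ 2 := by
    rw [measVar_eq pX hX1 hX2]; ring
  unfold affineReconLoss
  have hinner : ∀ x : ℝ, (∫ η, (m * (s * x + η) + b - x) ^ 2 ∂pH)
      = ((m * s - 1) * x + b) ^ 2 + m ^ 2 * measVar pH := by
    intro x
    have h : ∀ η : ℝ, (m * (s * x + η) + b - x) ^ 2
        = (((m * s - 1) * x + b) + m * η) ^ 2 := by intro η; ring
    simp_rw [h, inner_int pH hH1 hH2, hHmean, hE2]
    ring
  simp_rw [hinner]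
  have h2 : ∀ x : ℝ, ((m * s - 1) * x + b) ^ 2 + m ^ 2 * measVar pH
      = (m * s - 1) ^ 2 * x ^ 2 + (2 * (m * s - 1) * b) * x
        + (b ^ 2 + m ^ 2 * measVar pH) := by intro x; ring
  simp_rw [h2]
  have i1 : Integrable (fun x : ℝ => (m * s - 1) ^ 2 * x ^ 2
      + (2 * (m * s - 1) * b) * x) pX := (hX2.const_mul _).add (hX1.const_mul _)
  rw [integral_add i1 (integrable_const _),
      integral_add (hX2.const_mul _) (hX1.const_mul _),
      integral_const_mul, integral_const_mul, integral_const]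
  simp only [probReal_univ, ENNReal.toReal_one, one_smul]
  rw [hEX2]
  show _ = (m*s-1)^2 * measVar pX + ((m*s-1) * measMean pX + b)^2 + m^2 * measVar pH
  unfold measMean
  ring

lemma clamp_bounds (L : ℝ) (hL0 : 0 ≤ L) (hL1 : L < 1) (r : ℝ) :
    1 / (1 + L) ≤ clampedSlope L r ∧ clampedSlope L r ≤ 1 / (1 - L) := by
  have h1 : (0:ℝ) < 1 + L := by linarith
  have h2 : (0:ℝ) < 1 - L := by linarith
  have hle : 1 / (1 + L) ≤ 1 / (1 - L) := by
    apply div_le_div_of_nonneg_left (by norm_num) h2 (by linarith)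
  unfold clampedSlope
  split_ifs with ha hb
  · exact ⟨le_refl _, hle⟩
  · exact ⟨hle, le_refl _⟩
  · exact ⟨not_lt.mp ha, not_lt.mp hb⟩

lemma clamp_key (L : ℝ) (hL0 : 0 ≤ L) (hL1 : L < 1) (r m : ℝ)
    (hm1 : 1 / (1 + L) ≤ m) (hm2 : m ≤ 1 / (1 - L)) :
    (clampedSlope L r - r) ^ 2 ≤ (m - r) ^ 2 ∧
      ((m - r) ^ 2 ≤ (clampedSlope L r - r) ^ 2 → m = clampedSlope L r) := by
  unfold clampedSlope
  split_ifs with ha hb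
  · constructor
    · nlinarith
    · intro h; nlinarith
  · constructor
    · nlinarith
    · intro h; nlinarith
  · constructor
    · nlinarith
    · intro h; nlinarith

/-- **Reconstruction training over affine maps (Lemma 4.7).** Let `pX, pH` be
probability measures on `ℝ` with finite first and second moments, `pH` centered,
`s = σ² ∈ (0,1]`, `0 ≤ L < 1`, and `s²·Var(pX) + Var(pH) > 0`. Among affine
maps `ψ(z) = m z + b` with `1/(1+L) ≤ m ≤ 1/(1-L)`, the expected reconstruction
loss is uniquely minimized by `m* = clamp(s·Var(pX)/(s²·Var(pX) + Var(pH)))` and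
`b* = (1 - s·m*)·μ_X`. -/
theorem recon_training_affine_minimizer
    (pX pH : Measure ℝ) [IsProbabilityMeasure pX] [IsProbabilityMeasure pH]
    (hX1 : Integrable (fun x => x) pX) (hX2 : Integrable (fun x => x ^ 2) pX)
    (hH1 : Integrable (fun η => η) pH) (hH2 : Integrable (fun η => η ^ 2) pH)
    (hHmean : measMean pH = 0)
    (s L : ℝ) (hs0 : 0 < s) (hs1 : s ≤ 1) (hL0 : 0 ≤ L) (hL1 : L < 1)
    (hpos : 0 < s ^ 2 * measVar pX + measVar pH) :
    (∀ m b : ℝ, 1 / (1 + L) ≤ m → m ≤ 1 / (1 - L) →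
        affineReconLoss pX pH s
            (clampedSlope L (s * measVar pX / (s ^ 2 * measVar pX + measVar pH)))
            ((1 - s * clampedSlope L
                (s * measVar pX / (s ^ 2 * measVar pX + measVar pH))) * measMean pX) ≤
          affineReconLoss pX pH s m b) ∧
      (∀ m b : ℝ, 1 / (1 + L) ≤ m → m ≤ 1 / (1 - L) →
        affineReconLoss pX pH s m b ≤
          affineReconLoss pX pH s
            (clampedSlope L (s * measVar pX / (s ^ 2 * measVar pX + measVar pH)))
            ((1 - s * clampedSlope L
                (s * measVar pX / (s ^ 2 * measVar pX + measVar pH))) * measMean pX) →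
        m = clampedSlope L (s * measVar pX / (s ^ 2 * measVar pX + measVar pH)) ∧
          b = (1 - s * clampedSlope L
              (s * measVar pX / (s ^ 2 * measVar pX + measVar pH))) * measMean pX) := by
  set VX := measVar pX with hVX
  set VH := measVar pH with hVH
  set μ := measMean pX with hμ
  set c := s ^ 2 * VX + VH with hc
  set r := s * VX / c with hr
  set mstar := clampedSlope L r with hm
  have hcne : c ≠ 0 := ne_of_gt hpos
  have hcr : c * r = s * VX := by rw [hr]; field_simp
  have hform : ∀ m b : ℝ, affineReconLoss pX pH s m b
      = c * (m - r) ^ 2 + (VX - c * r ^ 2) + ((m * s - 1) * μ + b) ^ 2 := by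
    intro m b
    rw [loss_eq pX pH hX1 hX2 hH1 hH2 hHmean s m b, ← hVX, ← hVH, ← hμ]
    linear_combination 2 * m * hcr
  have hbstar : (mstar * s - 1) * μ + (1 - s * mstar) * μ = 0 := by ring
  have hstar : affineReconLoss pX pH s mstar ((1 - s * mstar) * μ)
      = c * (mstar - r) ^ 2 + (VX - c * r ^ 2) := by
    rw [hform, hbstar]; ring
  constructor
  · intro m b hm1 hm2
    rw [hstar, hform]
    have h1 := (clamp_key L hL0 hL1 r m hm1 hm2).1
    nlinarith [sq_nonneg ((m * s - 1) * μ + b)]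
  · intro m b hm1 hm2 hle
    rw [hstar, hform] at hle
    have h1 := (clamp_key L hL0 hL1 r m hm1 hm2).1
    have hk := (clamp_key L hL0 hL1 r m hm1 hm2).2
    have hsq : ((m * s - 1) * μ + b) ^ 2 = 0 := by nlinarith
    have hmeq : m = mstar := hk (by nlinarith)
    refine ⟨hmeq, ?_⟩
    have hb0 : (m * s - 1) * μ + b = 0 := by
      have := sq_eq_zero_iff.mp hsq
      exact this
    rw [hmeq] at hb0
    linarith [hb0, hbstar]
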